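/- Let (P, w, d) be weighted differential, let p ∈ P, and let a₁, a₂, a₃ be three pairwise distinct points each of which covers exactly p. Then the set of points whose set of lower covers is exactly {a₁, a₂, a₃} is finite, and w(p) plus the sum of the weights of these points equals 0. -/

import Mathlib

/-- A finite lower set of a poset: a finite set closed downward. -/
def IsFinLowerSet {P : Type*} [PartialOrder P] (I : Set P) : Prop :=
  I.Finite ∧ ∀ ⦃q p : P⦄, q ≤ p → p ∈ I → q ∈ I

/-- The insertion points of a set `I`: the points not in `I` all of whose
strict lower bounds lie in `I` (the minimal elements of the complement). -/
def insPts {P : Type*} [PartialOrder P] (I : Set P) : Set P :=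
  {x | x ∉ I ∧ ∀ y : P, y < x → y ∈ I}

/-- The deletion points of a set `I`: its maximal elements. -/
def delPts {P : Type*} [PartialOrder P] (I : Set P) : Set P :=
  {x | x ∈ I ∧ ∀ y ∈ I, ¬ x < y}

/-- `(P, w, d)` is weighted differential: every principal lower set is finite,
all weights are positive, `d` is positive, and for every finite lower set `I`
the set of insertion points is finite and the total weight of insertion points
equals the total weight of deletion points plus `d`. -/
def WeightedDifferential {P : Type*} [PartialOrder P] (w : P → ℤ) (d : ℤ) : Prop :=
  (∀ p : P, {q : P | q ≤ p}.Finite) ∧ (∀ p : P, 0 < w p) ∧ 0 < d ∧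
    ∀ I : Set P, IsFinLowerSet I →
      (insPts I).Finite ∧ (∑ᶠ x ∈ insPts I, w x) = (∑ᶠ x ∈ delPts I, w x) + d

/-- `a` covers exactly `p`: the set of lower covers of `a` is precisely `{p}`. -/
def CoversExactly {P : Type*} [PartialOrder P] (a p : P) : Prop :=
  {x : P | x ⋖ a} = {p}

section Aux

variable {P : Type*} [PartialOrder P]

def USet (S : Set P) : Set P :=
  {x | {y : P | y ⋖ x} ⊆ S ∧ {y : P | y ⋖ x}.Nonempty}

def VSet (S : Set P) : Set P := {c : P | {x : P | x ⋖ c} = S}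

lemma exists_le_covby (hfin : ∀ p : P, {q : P | q ≤ p}.Finite) {y x : P} (hyx : y < x) :
    ∃ z : P, y ≤ z ∧ z ⋖ x := by
  have hF : {q : P | y ≤ q ∧ q < x}.Finite :=
    (hfin x).subset (fun q hq => le_of_lt hq.2)
  obtain ⟨z, hz, hmax⟩ : ∃ z ∈ {q : P | y ≤ q ∧ q < x}, ∀ c ∈ {q : P | y ≤ q ∧ q < x}, id z ≤ id c → id z = id c := by
    obtain ⟨z, hz, hm⟩ := hF.exists_maximalFor id _ ⟨y, le_refl y, hyx⟩
    exact ⟨z, hz, fun c hc hle => le_antisymm hle (hm hc hle)⟩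
  refine ⟨z, hz.1, ⟨hz.2, fun c hzc hcx => ?_⟩⟩
  exact absurd (hmax c ⟨hz.1.trans hzc.le, hcx⟩ hzc.le) (ne_of_lt hzc)

lemma covEx_lt {a p : P} (h : CoversExactly a p) : p ⋖ a := by
  have : p ∈ ({p} : Set P) := rfl
  rw [← h] at this
  exact this

lemma covEx_le (hfin : ∀ p : P, {q : P | q ≤ p}.Finite) {a p y : P}
    (h : CoversExactly a p) (hy : y < a) : y ≤ p := by
  obtain ⟨z, hyz, hz⟩ := exists_le_covby hfin hy
  have : z ∈ {x : P | x ⋖ a} := hz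
  rw [h] at this
  exact this ▸ hyz

lemma master (w : P → ℤ) (d : ℤ) (h : WeightedDifferential w d) (p : P)
    (S : Set P) (hS : S.Finite) (hne : S.Nonempty)
    (hcov : ∀ a ∈ S, CoversExactly a p) :
    (USet S).Finite ∧ (∑ᶠ x ∈ USet S, w x) = 2 * (∑ᶠ a ∈ S, w a) - w p := by
  obtain ⟨hfin, hwpos, hdpos, hWD⟩ := h
  set I0 : Set P := {q : P | q ≤ p} with hI0def
  have hpltA : ∀ a ∈ S, p < a := fun a ha => (covEx_lt (hcov a ha)).lt
  have hleP : ∀ a ∈ S, ∀ y : P, y < a → y ≤ p := fun a ha y hy => covEx_le hfin (hcov a ha) hy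
  have hSnotI0 : ∀ a ∈ S, a ∉ I0 :=
    fun a ha h' => absurd (lt_of_lt_of_le (hpltA a ha) h') (lt_irrefl p)
  have hI0ls : IsFinLowerSet I0 := ⟨hfin p, fun q r hqr hr => le_trans hqr hr⟩
  obtain ⟨hfI, heqI⟩ := hWD I0 hI0ls
  have hdelI : delPts I0 = {p} := by
    ext x
    constructor
    · rintro ⟨hx1, hx2⟩
      rcases lt_or_eq_of_le (hx1 : x ≤ p) with h' | h'
      · exact absurd h' (hx2 p le_rfl)
      · exact h'
    · intro hx
      rw [(hx : x = p)]
      exact ⟨le_rfl, fun y hy hlt => absurd (lt_of_lt_of_le hlt hy) (lt_irrefl p)⟩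
  rw [hdelI, finsum_mem_singleton] at heqI
  set J : Set P := I0 ∪ S with hJdef
  have hJls : IsFinLowerSet J := by
    refine ⟨(hfin p).union hS, ?_⟩
    rintro q r hqr (hr | hr)
    · exact Or.inl (le_trans hqr hr)
    · rcases lt_or_eq_of_le hqr with h' | h'
      · exact Or.inl (hleP r hr q h')
      · exact Or.inr (h' ▸ hr)
  obtain ⟨hfJ, heqJ⟩ := hWD J hJls
  have hdelJ : delPts J = S := by
    ext x
    constructor
    · rintro ⟨(hx | hx), hmax⟩
      · obtain ⟨a, ha⟩ := hne
        exact absurd (lt_of_le_of_lt hx (hpltA a ha)) (hmax a (Or.inr ha))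
      · exact hx
    · intro hx
      refine ⟨Or.inr hx, ?_⟩
      rintro y (hy | hy) hlt
      · exact absurd ((hpltA x hx).trans (lt_of_lt_of_le hlt hy)) (lt_irrefl p)
      · exact absurd ((hpltA x hx).trans_le (hleP y hy x hlt)) (lt_irrefl p)
  rw [hdelJ] at heqJ
  have hSins : S ⊆ insPts I0 := fun a ha => ⟨hSnotI0 a ha, fun y hy => hleP a ha y hy⟩
  have hUJ : insPts J = (insPts I0 \ S) ∪ USet S := by
    ext x
    constructor
    · rintro ⟨hxJ, hlow⟩
      by_cases hex : ∃ a ∈ S, a < x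
      · obtain ⟨a, haS, hax⟩ := hex
        refine Or.inr ⟨?_, ?_⟩
        · intro y hy
          rcases hlow y hy.lt with h' | h'
          · exact absurd hax (hy.2 (lt_of_le_of_lt h' (hpltA a haS)))
          · exact h'
        · obtain ⟨z, hz1, hz2⟩ := exists_le_covby hfin hax
          exact ⟨z, hz2⟩
      · push_neg at hex
        left
        refine ⟨⟨fun hxI => hxJ (Or.inl hxI), fun y hy => ?_⟩, fun hxS => hxJ (Or.inr hxS)⟩
        rcases hlow y hy with h' | h'
        · exact h'
        · exact absurd hy (hex y h')
    · rintro (⟨⟨hxI, hlow⟩, hxS⟩ | ⟨hsub, ⟨z, hz⟩⟩)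
      · exact ⟨fun h' => h'.elim hxI hxS, fun y hy => Or.inl (hlow y hy)⟩
      · have hzS : z ∈ S := hsub hz
        have hzx : z < x := hz.lt
        refine ⟨?_, ?_⟩
        · rintro (hxI | hxS)
          · exact absurd ((hpltA z hzS).trans (hzx.trans_le hxI)) (lt_irrefl p)
          · exact absurd ((hpltA z hzS).trans_le (hleP x hxS z hzx)) (lt_irrefl p)
        · intro y hy
          obtain ⟨z', hz'1, hz'2⟩ := exists_le_covby hfin hy
          have hz'S : z' ∈ S := hsub hz'2
          rcases lt_or_eq_of_le hz'1 with h' | h'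
          · exact Or.inl (hleP z' hz'S y h')
          · exact Or.inr (h' ▸ hz'S)
  have hdisj : Disjoint (insPts I0 \ S) (USet S) := by
    rw [Set.disjoint_left]
    rintro x ⟨⟨hxI, hlow⟩, _⟩ ⟨hsub, z, hz⟩
    exact hSnotI0 z (hsub hz) (hlow z hz.lt)
  rw [hUJ] at hfJ heqJ
  have hfU : (USet S).Finite := hfJ.subset Set.subset_union_right
  have hfD : (insPts I0 \ S).Finite := hfJ.subset Set.subset_union_left
  rw [finsum_mem_union hdisj hfD hfU] at heqJ
  have hsplit : (∑ᶠ x ∈ insPts I0, w x)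
      = (∑ᶠ x ∈ insPts I0 \ S, w x) + (∑ᶠ x ∈ S, w x) := by
    rw [← finsum_mem_union Set.disjoint_sdiff_left (hfI.subset Set.diff_subset) hS,
      Set.diff_union_of_subset hSins]
  refine ⟨hfU, by linarith⟩

end Aux

section Aux2

variable {P : Type*} [PartialOrder P]

lemma ne_of_mem_not_mem {S T : Set P} {x : P} (hx : x ∈ T) (hx' : x ∉ S) : S ≠ T :=
  fun h => hx' (h ▸ hx)

lemma VSet_disjoint {S T : Set P} (h : S ≠ T) : Disjoint (VSet S) (VSet T) :=
  Set.disjoint_left.mpr fun x h1 h2 => h ((h1 : _ = S).symm.trans h2)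

lemma VSet_subset_USet {S : Set P} (hS : S.Nonempty) : VSet S ⊆ USet S :=
  fun x hx => ⟨by rw [(hx : _ = S)], by rw [(hx : _ = S)]; exact hS⟩

lemma USet_mono {S T : Set P} (h : S ⊆ T) : USet S ⊆ USet T :=
  fun _ hx => ⟨hx.1.trans h, hx.2⟩

lemma USet_singleton (a : P) : USet ({a} : Set P) = VSet {a} := by
  ext x
  constructor
  · rintro ⟨hsub, hne⟩
    exact (hne.subset_singleton_iff).mp hsub
  · exact fun hx => VSet_subset_USet (Set.singleton_nonempty _) hx

lemma USet_pair (a b : P) : USet ({a, b} : Set P) = VSet {a} ∪ VSet {b} ∪ VSet {a, b} := by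
  ext x
  constructor
  · rintro ⟨hsub, hne⟩
    by_cases ha : a ∈ {y : P | y ⋖ x} <;> by_cases hb : b ∈ {y : P | y ⋖ x}
    · refine Or.inr (Set.Subset.antisymm hsub ?_)
      intro y hy
      simp only [Set.mem_insert_iff, Set.mem_singleton_iff] at hy
      rcases hy with rfl | rfl <;> assumption
    · refine Or.inl (Or.inl (Set.Subset.antisymm ?_ ?_))
      · intro y hy
        have h' := hsub hy
        simp only [Set.mem_insert_iff, Set.mem_singleton_iff] at h'
        rcases h' with rfl | rfl
        · rfl
        · exact absurd hy hb
      · intro y hy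
        simp only [Set.mem_singleton_iff] at hy
        subst hy; exact ha
    · refine Or.inl (Or.inr (Set.Subset.antisymm ?_ ?_))
      · intro y hy
        have h' := hsub hy
        simp only [Set.mem_insert_iff, Set.mem_singleton_iff] at h'
        rcases h' with rfl | rfl
        · exact absurd hy ha
        · rfl
      · intro y hy
        simp only [Set.mem_singleton_iff] at hy
        subst hy; exact hb
    · obtain ⟨y, hy⟩ := hne
      have h' := hsub hy
      simp only [Set.mem_insert_iff, Set.mem_singleton_iff] at h'
      rcases h' with rfl | rfl
      · exact absurd hy ha
      · exact absurd hy hb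
  · rintro ((h | h) | h)
    · exact USet_mono (by intro y hy; simp only [Set.mem_singleton_iff] at hy; subst hy; simp)
        (VSet_subset_USet (Set.singleton_nonempty _) h)
    · exact USet_mono (by intro y hy; simp only [Set.mem_singleton_iff] at hy; subst hy; simp)
        (VSet_subset_USet (Set.singleton_nonempty _) h)
    · exact VSet_subset_USet (Set.insert_nonempty _ _) h

lemma USet_triple (a b c : P) (hac : a ≠ c) (hbc : b ≠ c) :
    USet ({a, b, c} : Set P) =
      USet ({a, b} : Set P) ∪
        (VSet {c} ∪ VSet {a, c} ∪ VSet {b, c} ∪ VSet ({a, b, c} : Set P)) := by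
  ext x
  constructor
  · rintro ⟨hsub, hne⟩
    by_cases hc : c ∈ {y : P | y ⋖ x}
    · right
      by_cases ha : a ∈ {y : P | y ⋖ x} <;> by_cases hb : b ∈ {y : P | y ⋖ x}
      · refine Or.inr (Set.Subset.antisymm hsub ?_)
        intro y hy
        simp only [Set.mem_insert_iff, Set.mem_singleton_iff] at hy
        rcases hy with rfl | rfl | rfl <;> assumption
      · refine Or.inl (Or.inl (Or.inr (Set.Subset.antisymm ?_ ?_)))
        · intro y hy
          have h' := hsub hy
          simp only [Set.mem_insert_iff, Set.mem_singleton_iff] at h' ⊢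
          rcases h' with rfl | rfl | rfl
          · exact Or.inl rfl
          · exact absurd hy hb
          · exact Or.inr rfl
        · intro y hy
          simp only [Set.mem_insert_iff, Set.mem_singleton_iff] at hy
          rcases hy with rfl | rfl <;> assumption
      · refine Or.inl (Or.inr (Set.Subset.antisymm ?_ ?_))
        · intro y hy
          have h' := hsub hy
          simp only [Set.mem_insert_iff, Set.mem_singleton_iff] at h' ⊢
          rcases h' with rfl | rfl | rfl
          · exact absurd hy ha
          · exact Or.inl rfl
          · exact Or.inr rfl
        · intro y hy
          simp only [Set.mem_insert_iff, Set.mem_singleton_iff] at hy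
          rcases hy with rfl | rfl <;> assumption
      · refine Or.inl (Or.inl (Or.inl (Set.Subset.antisymm ?_ ?_)))
        · intro y hy
          have h' := hsub hy
          simp only [Set.mem_insert_iff, Set.mem_singleton_iff] at h' ⊢
          rcases h' with rfl | rfl | rfl
          · exact absurd hy ha
          · exact absurd hy hb
          · rfl
        · intro y hy
          simp only [Set.mem_singleton_iff] at hy
          subst hy; exact hc
    · left
      refine ⟨?_, hne⟩
      intro y hy
      have h' := hsub hy
      simp only [Set.mem_insert_iff, Set.mem_singleton_iff] at h' ⊢
      rcases h' with rfl | rfl | rfl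
      · exact Or.inl rfl
      · exact Or.inr rfl
      · exact absurd hy hc
  · rintro (h | (((h | h) | h) | h))
    · exact USet_mono (by intro y hy; simp only [Set.mem_insert_iff, Set.mem_singleton_iff] at hy ⊢; tauto) h
    · exact USet_mono (by intro y hy; simp only [Set.mem_insert_iff, Set.mem_singleton_iff] at hy ⊢; tauto)
        (VSet_subset_USet (Set.singleton_nonempty _) h)
    · exact USet_mono (by intro y hy; simp only [Set.mem_insert_iff, Set.mem_singleton_iff] at hy ⊢; tauto)
        (VSet_subset_USet (Set.insert_nonempty _ _) h)
    · exact USet_mono (by intro y hy; simp only [Set.mem_insert_iff, Set.mem_singleton_iff] at hy ⊢; tauto)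
        (VSet_subset_USet (Set.insert_nonempty _ _) h)
    · exact VSet_subset_USet (Set.insert_nonempty _ _) h

end Aux2

/-- In a weighted differential poset, if `a₁, a₂, a₃` are
pairwise distinct points each covering exactly `p`, then the set of points
whose lower covers are exactly `{a₁, a₂, a₃}` is finite and `w p` plus their
total weight equals `0`. -/
theorem sum_covers_exactly_triple {P : Type*} [PartialOrder P]
    (w : P → ℤ) (d : ℤ) (h : WeightedDifferential w d)
    (p a₁ a₂ a₃ : P) (h12 : a₁ ≠ a₂) (h13 : a₁ ≠ a₃) (h23 : a₂ ≠ a₃)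
    (ha₁ : CoversExactly a₁ p) (ha₂ : CoversExactly a₂ p)
    (ha₃ : CoversExactly a₃ p) :
    {c : P | {x : P | x ⋖ c} = {a₁, a₂, a₃}}.Finite ∧
      w p + (∑ᶠ c ∈ {c : P | {x : P | x ⋖ c} = {a₁, a₂, a₃}}, w c) = 0 := by
  have hcov : ∀ (S : Set P), S ⊆ {a₁, a₂, a₃} → ∀ a ∈ S, CoversExactly a p := by
    intro S hS a ha
    have := hS ha
    simp only [Set.mem_insert_iff, Set.mem_singleton_iff] at this
    rcases this with rfl | rfl | rfl <;> assumption
  have hsub1 : ({a₁} : Set P) ⊆ {a₁, a₂, a₃} := by intro y hy; simp only [Set.mem_singleton_iff] at hy; subst hy; simp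
  have hsub2 : ({a₂} : Set P) ⊆ {a₁, a₂, a₃} := by intro y hy; simp only [Set.mem_singleton_iff] at hy; subst hy; simp
  have hsub3 : ({a₃} : Set P) ⊆ {a₁, a₂, a₃} := by intro y hy; simp only [Set.mem_singleton_iff] at hy; subst hy; simp
  have hsub12 : ({a₁, a₂} : Set P) ⊆ {a₁, a₂, a₃} := by intro y hy; simp only [Set.mem_insert_iff, Set.mem_singleton_iff] at hy ⊢; tauto
  have hsub13 : ({a₁, a₃} : Set P) ⊆ {a₁, a₂, a₃} := by intro y hy; simp only [Set.mem_insert_iff, Set.mem_singleton_iff] at hy ⊢; tauto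
  have hsub23 : ({a₂, a₃} : Set P) ⊆ {a₁, a₂, a₃} := by intro y hy; simp only [Set.mem_insert_iff, Set.mem_singleton_iff] at hy ⊢; tauto
  obtain ⟨f1, e1⟩ := master w d h p {a₁} (Set.finite_singleton _) (Set.singleton_nonempty _)
    (hcov _ hsub1)
  obtain ⟨f2, e2⟩ := master w d h p {a₂} (Set.finite_singleton _) (Set.singleton_nonempty _)
    (hcov _ hsub2)
  obtain ⟨f3, e3⟩ := master w d h p {a₃} (Set.finite_singleton _) (Set.singleton_nonempty _)
    (hcov _ hsub3)
  obtain ⟨f12, e12⟩ := master w d h p {a₁, a₂} ((Set.finite_singleton _).insert _)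
    (Set.insert_nonempty _ _) (hcov _ hsub12)
  obtain ⟨f13, e13⟩ := master w d h p {a₁, a₃} ((Set.finite_singleton _).insert _)
    (Set.insert_nonempty _ _) (hcov _ hsub13)
  obtain ⟨f23, e23⟩ := master w d h p {a₂, a₃} ((Set.finite_singleton _).insert _)
    (Set.insert_nonempty _ _) (hcov _ hsub23)
  obtain ⟨f123, e123⟩ := master w d h p {a₁, a₂, a₃}
    (((Set.finite_singleton _).insert _).insert _) (Set.insert_nonempty _ _)
    (hcov _ (le_refl _))
  -- finiteness of the VSets
  have fV : ∀ S : Set P, S.Nonempty → S ⊆ {a₁, a₂, a₃} → (VSet S).Finite :=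
    fun S hne hsub => f123.subset ((VSet_subset_USet hne).trans (USet_mono hsub))
  have fV1 := fV {a₁} (Set.singleton_nonempty _) hsub1
  have fV2 := fV {a₂} (Set.singleton_nonempty _) hsub2
  have fV3 := fV {a₃} (Set.singleton_nonempty _) hsub3
  have fV13 := fV {a₁, a₃} (Set.insert_nonempty _ _) hsub13
  have fV23 := fV {a₂, a₃} (Set.insert_nonempty _ _) hsub23
  have fV123 := fV {a₁, a₂, a₃} (Set.insert_nonempty _ _) (le_refl _)
  -- sums over the index sets
  rw [finsum_mem_singleton] at e1 e2 e3
  rw [finsum_mem_pair h12] at e12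
  rw [finsum_mem_pair h13] at e13
  rw [finsum_mem_pair h23] at e23
  have htr : (∑ᶠ a ∈ ({a₁, a₂, a₃} : Set P), w a) = w a₁ + w a₂ + w a₃ := by
    rw [show ({a₁, a₂, a₃} : Set P) = {a₁} ∪ {a₂, a₃} from (Set.singleton_union).symm,
      finsum_mem_union ?_ (Set.finite_singleton _) ((Set.finite_singleton _).insert _),
      finsum_mem_singleton, finsum_mem_pair h23, add_assoc]
    rw [Set.disjoint_left]
    intro x hx hx'
    simp only [Set.mem_singleton_iff] at hx
    subst hx
    simp only [Set.mem_insert_iff, Set.mem_singleton_iff] at hx'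
    rcases hx' with h' | h'
    · exact h12 h'
    · exact h13 h'
  rw [htr] at e123
  -- set inequalities
  have n_1_3 : ({a₁} : Set P) ≠ {a₃} :=
    ne_of_mem_not_mem (rfl : a₃ ∈ ({a₃} : Set P)) (fun h' => h13 (Set.mem_singleton_iff.mp h').symm)
  have n_2_3 : ({a₂} : Set P) ≠ {a₃} :=
    ne_of_mem_not_mem (rfl : a₃ ∈ ({a₃} : Set P)) (fun h' => h23 (Set.mem_singleton_iff.mp h').symm)
  have not13 : a₁ ∉ ({a₃} : Set P) := fun h' => h13 (Set.mem_singleton_iff.mp h')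
  have not23 : a₂ ∉ ({a₃} : Set P) := fun h' => h23 (Set.mem_singleton_iff.mp h')
  have not1_23 : a₁ ∉ ({a₂, a₃} : Set P) := by
    intro h'
    simp only [Set.mem_insert_iff, Set.mem_singleton_iff] at h'
    rcases h' with h' | h'
    · exact h12 h'
    · exact h13 h'
  have not2_13 : a₂ ∉ ({a₁, a₃} : Set P) := by
    intro h'
    simp only [Set.mem_insert_iff, Set.mem_singleton_iff] at h'
    rcases h' with h' | h'
    · exact h12 h'.symm
    · exact h23 h'
  have n_1_13 : ({a₁} : Set P) ≠ {a₁, a₃} :=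
    ne_of_mem_not_mem (by simp : a₃ ∈ ({a₁, a₃} : Set P))
      (fun h' => h13 (Set.mem_singleton_iff.mp h').symm)
  have n_3_13 : ({a₃} : Set P) ≠ {a₁, a₃} :=
    ne_of_mem_not_mem (by simp : a₁ ∈ ({a₁, a₃} : Set P)) not13
  have n_2_23 : ({a₂} : Set P) ≠ {a₂, a₃} :=
    ne_of_mem_not_mem (by simp : a₃ ∈ ({a₂, a₃} : Set P))
      (fun h' => h23 (Set.mem_singleton_iff.mp h').symm)
  have n_3_23 : ({a₃} : Set P) ≠ {a₂, a₃} :=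
    ne_of_mem_not_mem (by simp : a₂ ∈ ({a₂, a₃} : Set P)) not23
  have n_3_all : ({a₃} : Set P) ≠ {a₁, a₂, a₃} :=
    ne_of_mem_not_mem (by simp : a₁ ∈ ({a₁, a₂, a₃} : Set P)) not13
  have n_13_23 : ({a₁, a₃} : Set P) ≠ {a₂, a₃} :=
    ne_of_mem_not_mem (by simp : a₂ ∈ ({a₂, a₃} : Set P)) not2_13
  have n_13_all : ({a₁, a₃} : Set P) ≠ {a₁, a₂, a₃} :=
    ne_of_mem_not_mem (by simp : a₂ ∈ ({a₁, a₂, a₃} : Set P)) not2_13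
  have n_23_all : ({a₂, a₃} : Set P) ≠ {a₁, a₂, a₃} :=
    ne_of_mem_not_mem (by simp : a₁ ∈ ({a₁, a₂, a₃} : Set P)) not1_23
  -- decompose the singleton sums
  rw [USet_singleton] at e1 e2 e3
  -- decompose the pair sums
  rw [USet_pair, finsum_mem_union (Disjoint.union_left (VSet_disjoint n_1_13)
      (VSet_disjoint n_3_13)) (fV1.union fV3) fV13,
    finsum_mem_union (VSet_disjoint n_1_3) fV1 fV3] at e13
  rw [USet_pair, finsum_mem_union (Disjoint.union_left (VSet_disjoint n_2_23)
      (VSet_disjoint n_3_23)) (fV2.union fV3) fV23,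
    finsum_mem_union (VSet_disjoint n_2_3) fV2 fV3] at e23
  -- decompose the triple sum
  have dUW : Disjoint (USet ({a₁, a₂} : Set P))
      (VSet {a₃} ∪ VSet {a₁, a₃} ∪ VSet {a₂, a₃} ∪ VSet ({a₁, a₂, a₃} : Set P)) := by
    rw [Set.disjoint_left]
    rintro x ⟨hsub, -⟩ hx
    have ha3 : a₃ ∈ {y : P | y ⋖ x} := by
      rcases hx with ((h' | h') | h') | h' <;> rw [(h' : _ = _)] <;> simp
    have := hsub ha3
    simp only [Set.mem_insert_iff, Set.mem_singleton_iff] at this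
    rcases this with h' | h'
    · exact h13 h'.symm
    · exact h23 h'.symm
  rw [USet_triple a₁ a₂ a₃ h13 h23,
    finsum_mem_union dUW f12 (((fV3.union fV13).union fV23).union fV123),
    finsum_mem_union (Disjoint.union_left (Disjoint.union_left
      (VSet_disjoint n_3_all) (VSet_disjoint n_13_all)) (VSet_disjoint n_23_all))
      ((fV3.union fV13).union fV23) fV123,
    finsum_mem_union (Disjoint.union_left (VSet_disjoint n_3_23)
      (VSet_disjoint n_13_23)) (fV3.union fV13) fV23,
    finsum_mem_union (VSet_disjoint n_3_13) fV3 fV13] at e123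
  refine ⟨fV123, ?_⟩
  have : (∑ᶠ c ∈ {c : P | {x : P | x ⋖ c} = {a₁, a₂, a₃}}, w c)
      = (∑ᶠ c ∈ VSet ({a₁, a₂, a₃} : Set P), w c) := rfl
  rw [this]
  linarith
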